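/- arXiv:0709.0142 — 4 statements merged into one kernel-verified Lean document; each statement's English description precedes it below -/
import Mathlib

section
/- For all integers n ≥ 0 and ℓ ≥ 0 there exist real coefficients b_0, …, b_ℓ with b_s = 0 whenever s and ℓ have different parity, such that ζ^{∘n}(J_z^ℓ) = Σ_{s=0}^{ℓ} b_s J_z^s. That is, ζ^{∘n}(J_z^ℓ) is a real polynomial in J_z of degree at most ℓ containing only powers of the same parity as ℓ. -/
open Matrix Complex Kronecker
open scoped ComplexOrder

noncomputable section

/-- spin value j = (d-1)/2 -/
def jr (d : ℕ) : ℝ := ((d : ℝ) - 1) / 2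

/-- λ = j(j+1) = (d²-1)/4 -/
def lam (d : ℕ) : ℝ := ((d : ℝ) ^ 2 - 1) / 4

/-- angular momentum operator J_z -/
def Jz (d : ℕ) : Matrix (Fin d) (Fin d) ℂ :=
  Matrix.diagonal (fun m => ((m : ℂ) - ((d : ℂ) - 1) / 2))

/-- raising operator J_+ -/
def Jp (d : ℕ) : Matrix (Fin d) (Fin d) ℂ :=
  Matrix.of (fun a b : Fin d =>
    if (a : ℕ) = (b : ℕ) + 1 then
      (Real.sqrt (((b : ℕ) + 1) * ((d : ℝ) - 1 - (b : ℕ))) : ℂ)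
    else 0)

/-- lowering operator J_- -/
def Jm (d : ℕ) : Matrix (Fin d) (Fin d) ℂ := (Jp d)ᴴ

/-- J_x -/
def Jx (d : ℕ) : Matrix (Fin d) (Fin d) ℂ := (2 : ℂ)⁻¹ • (Jp d + Jm d)

/-- J_y -/
def Jy (d : ℕ) : Matrix (Fin d) (Fin d) ℂ := (2 * Complex.I)⁻¹ • (Jp d - Jm d)

/-- the superoperator ζ -/
def zeta (d : ℕ) (X : Matrix (Fin d) (Fin d) ℂ) : Matrix (Fin d) (Fin d) ℂ :=
  ((lam d : ℂ))⁻¹ • (Jx d * X * Jx d + Jy d * X * Jy d + Jz d * X * Jz d)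

/-- n-fold composition ζ^∘n -/
def zetaIter (d : ℕ) (n : ℕ) (X : Matrix (Fin d) (Fin d) ℂ) : Matrix (Fin d) (Fin d) ℂ :=
  (zeta d)^[n] X

/-- rotation e^{-iθ J} -/
def rot (d : ℕ) (K : Matrix (Fin d) (Fin d) ℂ) (θ : ℝ) : Matrix (Fin d) (Fin d) ℂ :=
  NormedSpace.exp ((-Complex.I * (θ : ℂ)) • K)

/-- rotation covariance of a linear map with respect to all three generators -/
def RotCovariant (d : ℕ)
    (ξ : Matrix (Fin d) (Fin d) ℂ →ₗ[ℂ] Matrix (Fin d) (Fin d) ℂ) : Prop :=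
  ∀ K ∈ ({Jx d, Jy d, Jz d} : Set (Matrix (Fin d) (Fin d) ℂ)), ∀ (θ : ℝ),
    ∀ X : Matrix (Fin d) (Fin d) ℂ,
      ξ (rot d K θ * X * rot d K (-θ)) = rot d K θ * ξ X * rot d K (-θ)

/-- positivity of a map -/
def PosMap (d : ℕ)
    (ξ : Matrix (Fin d) (Fin d) ℂ →ₗ[ℂ] Matrix (Fin d) (Fin d) ℂ) : Prop :=
  ∀ X : Matrix (Fin d) (Fin d) ℂ, X.PosSemidef → (ξ X).PosSemidef

end


open Finset

noncomputable section

lemma lam_pos {d : ℕ} (hd : 2 ≤ d) : 0 < lam d := by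
  have : (2:ℝ) ≤ (d:ℝ) := by exact_mod_cast hd
  unfold lam; nlinarith

-- eps n i = coefficient of x^i in (x-1)^n + (x+1)^n
def eps (n i : ℕ) : ℂ := if (n + i) % 2 = 0 then 2 * (n.choose i : ℂ) else 0

lemma S_eq (n : ℕ) (x : ℂ) :
    (x - 1) ^ n + (x + 1) ^ n = ∑ i ∈ range (n + 1), eps n i * x ^ i := by
  have h1 : (x + 1) ^ n = ∑ i ∈ range (n + 1), x ^ i * 1 ^ (n - i) * (n.choose i : ℂ) :=
    add_pow x 1 n
  have h2 : (x - 1) ^ n = ∑ i ∈ range (n + 1), x ^ i * (-1:ℂ) ^ (n - i) * (n.choose i : ℂ) := by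
    rw [sub_eq_add_neg, add_pow]
  rw [h1, h2, ← Finset.sum_add_distrib]
  refine Finset.sum_congr rfl fun i hi => ?_
  have hin : i ≤ n := by simpa [Nat.lt_succ_iff] using hi
  unfold eps
  by_cases hp : (n + i) % 2 = 0
  · have he : Even (n - i) := by
      rw [Nat.even_sub hin]; simp only [Nat.even_iff]; omega
    rw [if_pos hp, he.neg_one_pow]
    ring
  · have ho : Odd (n - i) := by
      rw [Nat.odd_sub hin]; simp only [Nat.odd_iff, Nat.even_iff]; omega
    rw [if_neg hp, ho.neg_one_pow]
    ring

def cR (d k t : ℕ) : ℝ :=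
  if (k + t) % 2 = 0 ∧ t ≤ k then
    (k.choose t : ℝ) - (lam d)⁻¹ * (if 1 ≤ t then ((k + 1).choose (t - 1) : ℝ) else 0)
  else 0

lemma cR_parity (d k t : ℕ) (h : t % 2 ≠ k % 2) : cR d k t = 0 := by
  unfold cR; rw [if_neg]; rintro ⟨h1, -⟩; omega

lemma cR_gt (d k t : ℕ) (h : k < t) : cR d k t = 0 := by
  unfold cR; rw [if_neg]; rintro ⟨-, h2⟩; omega

lemma key_id {d : ℕ} (hd : 2 ≤ d) (k : ℕ) (x : ℂ) :
    ((lam d : ℂ) - x * (x - 1)) * (x - 1) ^ k + ((lam d : ℂ) - x * (x + 1)) * (x + 1) ^ k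
      + 2 * x ^ (k + 2)
    = ∑ t ∈ range (k + 1), (2 * (lam d : ℂ) * (cR d k t : ℂ)) * x ^ t := by
  have hΛ : (lam d : ℂ) ≠ 0 := by
    exact_mod_cast Complex.ofReal_ne_zero.mpr (lam_pos hd).ne'
  set Λ : ℂ := (lam d : ℂ) with hL
  have e1 : (Λ - x * (x - 1)) * (x - 1) ^ k + (Λ - x * (x + 1)) * (x + 1) ^ k
      + 2 * x ^ (k + 2)
      = Λ * ((x - 1) ^ k + (x + 1) ^ k) - x * ((x - 1) ^ (k + 1) + (x + 1) ^ (k + 1))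
      + 2 * x ^ (k + 2) := by ring
  rw [e1, S_eq k, S_eq (k + 1), sum_range_succ (fun i => eps (k + 1) i * x ^ i) (k + 1)]
  have e2 : eps (k + 1) (k + 1) = 2 := by simp [eps, Nat.add_mod]; omega
  have e3 : eps (k + 1) k = 0 := by
    unfold eps; rw [if_neg]; omega
  rw [sum_range_succ (fun i => eps (k + 1) i * x ^ i) k, e2, e3]
  have e4 : x * (∑ i ∈ range k, eps (k + 1) i * x ^ i + 0 * x ^ k + 2 * x ^ (k + 1))
      = (∑ i ∈ range k, eps (k + 1) i * x ^ (i + 1)) + 2 * x ^ (k + 2) := by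
    rw [mul_add, mul_add, Finset.mul_sum]
    have hc : ∀ i ∈ range k, x * (eps (k + 1) i * x ^ i) = eps (k + 1) i * x ^ (i + 1) :=
      fun i _ => by ring
    rw [Finset.sum_congr rfl hc]
    ring
  rw [e4]
  set h : ℕ → ℂ := fun t => if t = 0 then 0 else eps (k + 1) (t - 1) * x ^ t with hh
  have e5 : ∑ i ∈ range k, eps (k + 1) i * x ^ (i + 1) = ∑ t ∈ range (k + 1), h t := by
    rw [Finset.sum_range_succ' h k]
    simp [hh]
  have e6 : ∀ (A B C : ℂ), A - (B + C) + C = A - B := fun A B C => by ring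
  rw [e5, Finset.mul_sum, e6, ← Finset.sum_sub_distrib]
  refine Finset.sum_congr rfl fun t ht => ?_
  have htk : t ≤ k := by simpa [Nat.lt_succ_iff] using ht
  have hht : h t = if t = 0 then 0 else eps (k + 1) (t - 1) * x ^ t := rfl
  rw [hht]
  by_cases hp : (k + t) % 2 = 0
  · by_cases ht0 : t = 0
    · subst ht0
      simp only [if_pos rfl, eps, cR, hp, if_true, Nat.zero_le, and_true, htk, true_and,
        if_pos, Nat.choose_zero_right, sub_zero, Nat.not_succ_le_zero, if_false, mul_zero,
        Nat.cast_one]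
      push_cast
      ring
    · have h1t : 1 ≤ t := Nat.one_le_iff_ne_zero.mpr ht0
      have hp2 : (k + 1 + (t - 1)) % 2 = 0 := by omega
      rw [if_neg ht0]
      simp only [eps, cR, if_pos hp, if_pos hp2, if_pos h1t,
        if_pos (show (k + t) % 2 = 0 ∧ t ≤ k from ⟨hp, htk⟩)]
      push_cast
      field_simp
      rw [← hL]
      linear_combination (x ^ t * ((k + 1).choose (t - 1) : ℂ)) * (mul_inv_cancel₀ hΛ)
  · simp only [eps, cR, if_neg hp, if_neg (show ¬((k + t) % 2 = 0 ∧ t ≤ k) by tauto)]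
    by_cases ht0 : t = 0
    · simp [ht0]
    · have h1t : 1 ≤ t := Nat.one_le_iff_ne_zero.mpr ht0
      have hp2 : ¬(k + 1 + (t - 1)) % 2 = 0 := by omega
      rw [if_neg ht0, if_neg hp2]
      simp

lemma scalar_id {d : ℕ} (hd : 2 ≤ d) (k : ℕ) (x : ℂ) :
    ((lam d : ℂ))⁻¹ * ((2:ℂ)⁻¹ * (((lam d : ℂ) - x * (x - 1)) * (x - 1) ^ k
        + ((lam d : ℂ) - x * (x + 1)) * (x + 1) ^ k) + x ^ 2 * x ^ k)
    = ∑ t ∈ range (k + 1), (cR d k t : ℂ) * x ^ t := by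
  have hΛ : (lam d : ℂ) ≠ 0 := Complex.ofReal_ne_zero.mpr (lam_pos hd).ne'
  have hk := key_id hd k x
  have e1 : ((lam d : ℂ))⁻¹ * ((2:ℂ)⁻¹ * (((lam d : ℂ) - x * (x - 1)) * (x - 1) ^ k
        + ((lam d : ℂ) - x * (x + 1)) * (x + 1) ^ k) + x ^ 2 * x ^ k)
      = (2:ℂ)⁻¹ * ((lam d : ℂ))⁻¹ * ((((lam d : ℂ) - x * (x - 1)) * (x - 1) ^ k
        + ((lam d : ℂ) - x * (x + 1)) * (x + 1) ^ k) + 2 * x ^ (k + 2)) := by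
    rw [pow_add]; ring
  rw [e1, hk, Finset.mul_sum]
  refine Finset.sum_congr rfl fun t _ => ?_
  field_simp

lemma cross (d : ℕ) (X : Matrix (Fin d) (Fin d) ℂ) :
    Jx d * X * Jx d + Jy d * X * Jy d
      = (2:ℂ)⁻¹ • (Jp d * X * Jm d + Jm d * X * Jp d) := by
  unfold Jx Jy
  simp only [smul_mul_assoc, mul_smul_comm, add_mul, mul_add, sub_mul, mul_sub, smul_add,
    smul_sub, smul_smul]
  match_scalars <;> field_simp <;> simp [mul_assoc, mul_comm, mul_left_comm, Complex.I_mul_I] <;> ring_nf <;> simp [Complex.I_sq] <;> ring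


def xc (d : ℕ) (m : Fin d) : ℂ := (m : ℂ) - ((d : ℂ) - 1) / 2

lemma diagA (d : ℕ) (F : ℂ → ℂ) :
    Jp d * Matrix.diagonal (fun m => F (xc d m)) * Jm d
      = Matrix.diagonal (fun a => ((lam d : ℂ) - xc d a * (xc d a - 1)) * F (xc d a - 1)) := by
  ext a b
  rw [Matrix.mul_apply]
  simp only [Matrix.mul_diagonal, Jm, conjTranspose_apply, Jp, of_apply]
  by_cases hab : a = b
  · subst hab
    rw [Matrix.diagonal_apply_eq]
    by_cases ha : (a : ℕ) = 0
    · rw [Finset.sum_eq_zero (fun l _ => by rw [if_neg (by omega)]; ring)]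
      have hxa : ((a : ℕ) : ℂ) = 0 := by rw [ha]; norm_num
      have : ((lam d : ℂ) - xc d a * (xc d a - 1)) = 0 := by
        unfold xc lam
        rw [hxa]
        push_cast
        ring
      rw [this, zero_mul]
    · have hal : (a : ℕ) - 1 < d := by omega
      set l₀ : Fin d := ⟨(a : ℕ) - 1, hal⟩ with hl₀
      have key : ∀ l : Fin d, l ≠ l₀ → ¬((a : ℕ) = (l : ℕ) + 1) := by
        intro l hl hcon
        apply hl
        apply Fin.ext
        simp only [hl₀]
        omega
      rw [Finset.sum_eq_single_of_mem l₀ (Finset.mem_univ l₀)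
        (fun l _ hl => by rw [if_neg (key l hl)]; ring)]
      have hc : (a : ℕ) = (l₀ : ℕ) + 1 := by simp [hl₀]; omega
      rw [if_pos hc]
      have hl₀c : ((l₀ : ℕ) : ℂ) = ((a : ℕ) : ℂ) - 1 := by
        have : ((l₀ : ℕ) : ℕ) = (a : ℕ) - 1 := rfl
        rw [this]
        push_cast [Nat.cast_sub (show 1 ≤ (a:ℕ) by omega)]
        ring
      have hnn : (0:ℝ) ≤ ((l₀ : ℕ) + 1) * ((d : ℝ) - 1 - (l₀ : ℕ)) := by
        have h1 : ((l₀ : ℕ) : ℝ) ≤ (d : ℝ) - 2 := by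
          have : (l₀ : ℕ) ≤ d - 2 := by omega
          have hd2 : (2:ℕ) ≤ d := by omega
          have := Nat.cast_le (α := ℝ).mpr this
          rw [Nat.cast_sub hd2] at this
          simpa using this
        nlinarith [Nat.cast_nonneg (α := ℝ) (l₀ : ℕ)]
      rw [Complex.star_def, Complex.conj_ofReal]
      rw [show ((Real.sqrt _ : ℝ) : ℂ) * F (xc d l₀) * ((Real.sqrt _ : ℝ) : ℂ)
        = ((Real.sqrt (((l₀ : ℕ) + 1) * ((d : ℝ) - 1 - (l₀ : ℕ))) : ℝ) : ℂ)
          * ((Real.sqrt (((l₀ : ℕ) + 1) * ((d : ℝ) - 1 - (l₀ : ℕ))) : ℝ) : ℂ) * F (xc d l₀)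
        from by ring]
      rw [← Complex.ofReal_mul, Real.mul_self_sqrt hnn]
      have hx : xc d l₀ = xc d a - 1 := by
        unfold xc
        rw [hl₀c]
        ring
      rw [hx]
      congr 1
      unfold lam xc
      push_cast
      rw [hl₀c]
      push_cast
      ring
  · rw [Matrix.diagonal_apply_ne _ hab]
    refine Finset.sum_eq_zero fun l _ => ?_
    by_cases h1 : (a : ℕ) = (l : ℕ) + 1
    · have h2 : ¬((b : ℕ) = (l : ℕ) + 1) := fun hc => hab (Fin.ext (by omega))
      rw [if_neg h2]
      simp
    · rw [if_neg h1]
      ring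

lemma diagB (d : ℕ) (F : ℂ → ℂ) :
    Jm d * Matrix.diagonal (fun m => F (xc d m)) * Jp d
      = Matrix.diagonal (fun a => ((lam d : ℂ) - xc d a * (xc d a + 1)) * F (xc d a + 1)) := by
  ext a b
  rw [Matrix.mul_apply]
  simp only [Matrix.mul_diagonal, Jm, conjTranspose_apply, Jp, of_apply]
  have hd1 : 1 ≤ d := a.pos
  by_cases hab : a = b
  · subst hab
    rw [Matrix.diagonal_apply_eq]
    by_cases ha : (a : ℕ) = d - 1
    · rw [Finset.sum_eq_zero (fun l _ => by
        rw [if_neg (show ¬((l : ℕ) = (a : ℕ) + 1) by omega)]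
        simp)]
      have hxa : ((a : ℕ) : ℂ) = (d : ℂ) - 1 := by
        rw [ha]
        push_cast [Nat.cast_sub hd1]
        ring
      have : ((lam d : ℂ) - xc d a * (xc d a + 1)) = 0 := by
        unfold xc lam
        push_cast
        rw [hxa]
        ring
      rw [this, zero_mul]
    · have hal : (a : ℕ) + 1 < d := by omega
      set l₀ : Fin d := ⟨(a : ℕ) + 1, hal⟩ with hl₀
      have key : ∀ l : Fin d, l ≠ l₀ → ¬((l : ℕ) = (a : ℕ) + 1) := by
        intro l hl hcon
        apply hl
        apply Fin.ext
        simp only [hl₀]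
        omega
      rw [Finset.sum_eq_single_of_mem l₀ (Finset.mem_univ l₀)
        (fun l _ hl => by rw [if_neg (key l hl)]; simp)]
      have hc : (l₀ : ℕ) = (a : ℕ) + 1 := rfl
      rw [if_pos hc]
      have hnn : (0:ℝ) ≤ ((a : ℕ) + 1) * ((d : ℝ) - 1 - (a : ℕ)) := by
        have h1 : ((a : ℕ) : ℝ) ≤ (d : ℝ) - 1 := by
          have : (a : ℕ) ≤ d - 1 := by omega
          have := Nat.cast_le (α := ℝ).mpr this
          rw [Nat.cast_sub hd1] at this
          simpa using this
        nlinarith [Nat.cast_nonneg (α := ℝ) (a : ℕ)]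
      rw [Complex.star_def, Complex.conj_ofReal]
      rw [show ((Real.sqrt (((a : ℕ) + 1) * ((d : ℝ) - 1 - (a : ℕ))) : ℝ) : ℂ)
          * F (xc d l₀) * ((Real.sqrt (((a : ℕ) + 1) * ((d : ℝ) - 1 - (a : ℕ))) : ℝ) : ℂ)
        = ((Real.sqrt (((a : ℕ) + 1) * ((d : ℝ) - 1 - (a : ℕ))) : ℝ) : ℂ)
          * ((Real.sqrt (((a : ℕ) + 1) * ((d : ℝ) - 1 - (a : ℕ))) : ℝ) : ℂ) * F (xc d l₀)
        from by ring]
      rw [← Complex.ofReal_mul, Real.mul_self_sqrt hnn]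
      have hl₀c : ((l₀ : ℕ) : ℂ) = ((a : ℕ) : ℂ) + 1 := by
        rw [hc]; push_cast; ring
      have hx : xc d l₀ = xc d a + 1 := by
        unfold xc
        rw [hl₀c]
        ring
      rw [hx]
      congr 1
      unfold lam xc
      push_cast
      ring
  · rw [Matrix.diagonal_apply_ne _ hab]
    refine Finset.sum_eq_zero fun l _ => ?_
    by_cases h1 : (l : ℕ) = (a : ℕ) + 1
    · have h2 : ¬((l : ℕ) = (b : ℕ) + 1) := fun hc => hab (Fin.ext (by omega))
      rw [if_neg h2]
      simp
    · rw [if_neg h1]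
      simp

lemma diagC (d : ℕ) (F : ℂ → ℂ) :
    Jz d * Matrix.diagonal (fun m => F (xc d m)) * Jz d
      = Matrix.diagonal (fun a => xc d a ^ 2 * F (xc d a)) := by
  have : Jz d = Matrix.diagonal (xc d) := rfl
  rw [this, diagonal_mul_diagonal, diagonal_mul_diagonal]
  congr 1
  funext a
  ring

lemma zeta_diag (d : ℕ) (F : ℂ → ℂ) :
    zeta d (Matrix.diagonal (fun m => F (xc d m)))
      = Matrix.diagonal (fun a => ((lam d : ℂ))⁻¹ * ((2:ℂ)⁻¹ *
          ((((lam d : ℂ)) - xc d a * (xc d a - 1)) * F (xc d a - 1)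
            + (((lam d : ℂ)) - xc d a * (xc d a + 1)) * F (xc d a + 1))
          + xc d a ^ 2 * F (xc d a))) := by
  unfold zeta
  rw [show Jx d * Matrix.diagonal (fun m => F (xc d m)) * Jx d
      + Jy d * Matrix.diagonal (fun m => F (xc d m)) * Jy d
      + Jz d * Matrix.diagonal (fun m => F (xc d m)) * Jz d
    = (Jx d * Matrix.diagonal (fun m => F (xc d m)) * Jx d
      + Jy d * Matrix.diagonal (fun m => F (xc d m)) * Jy d)
      + Jz d * Matrix.diagonal (fun m => F (xc d m)) * Jz d from rfl]
  rw [cross, diagA, diagB, diagC]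
  ext a b
  by_cases hab : a = b
  · subst hab
    simp only [Matrix.smul_apply, Matrix.add_apply, Matrix.diagonal_apply_eq, smul_eq_mul]
  · simp only [Matrix.smul_apply, Matrix.add_apply, Matrix.diagonal_apply_ne _ hab,
      smul_eq_mul]
    ring


lemma zeta_pow {d : ℕ} (hd : 2 ≤ d) (k : ℕ) :
    zeta d (Jz d ^ k) = ∑ t ∈ range (k + 1), (cR d k t : ℂ) • Jz d ^ t := by
  have hJz : Jz d = Matrix.diagonal (xc d) := rfl
  have hpow : ∀ t : ℕ, Jz d ^ t = Matrix.diagonal (fun m => (xc d m) ^ t) := by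
    intro t
    rw [hJz, Matrix.diagonal_pow]
    rfl
  rw [hpow k,
    show (Matrix.diagonal (fun m => (xc d m) ^ k) : Matrix (Fin d) (Fin d) ℂ)
      = Matrix.diagonal (fun m => (fun z : ℂ => z ^ k) (xc d m)) from rfl,
    zeta_diag d (fun z : ℂ => z ^ k),
    Finset.sum_congr rfl (fun t _ => by rw [hpow t])]
  ext a b
  rw [Matrix.sum_apply]
  by_cases hab : a = b
  · subst hab
    simp only [Matrix.diagonal_apply_eq, Matrix.smul_apply, smul_eq_mul]
    exact scalar_id hd k (xc d a)
  · rw [Matrix.diagonal_apply_ne _ hab, Finset.sum_eq_zero]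
    intro t _
    rw [Matrix.smul_apply, Matrix.diagonal_apply_ne _ hab, smul_zero]

lemma zeta_linear (d : ℕ) (F : Finset ℕ) (a : ℕ → ℂ) (M : ℕ → Matrix (Fin d) (Fin d) ℂ) :
    zeta d (∑ s ∈ F, a s • M s) = ∑ s ∈ F, a s • zeta d (M s) := by
  unfold zeta
  simp only [Finset.mul_sum, Finset.sum_mul, smul_mul_assoc, mul_smul_comm,
    ← Finset.sum_add_distrib, Finset.smul_sum, smul_add]
  refine Finset.sum_congr rfl fun s _ => ?_
  module

theorem stmt_3 (d : ℕ) (hd : 2 ≤ d) (n ℓ : ℕ) :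
    ∃ b : ℕ → ℝ,
      (∀ s : ℕ, s % 2 ≠ ℓ % 2 → b s = 0) ∧
      zetaIter d n ((Jz d) ^ ℓ) =
        ∑ s ∈ Finset.range (ℓ + 1), (b s : ℂ) • (Jz d) ^ s := by
  induction n with
  | zero =>
    refine ⟨fun s => if s = ℓ then 1 else 0, fun s hs => ?_, ?_⟩
    · show (if s = ℓ then (1:ℝ) else 0) = 0
      rw [if_neg]; rintro rfl; exact hs rfl
    · have : zetaIter d 0 ((Jz d) ^ ℓ) = (Jz d) ^ ℓ := rfl
      rw [this,
        Finset.sum_congr rfl (fun s _ => show ((if s = ℓ then (1:ℝ) else 0 : ℝ) : ℂ) • Jz d ^ s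
          = if s = ℓ then Jz d ^ s else 0 from by split_ifs <;> simp),
        Finset.sum_ite_eq' (Finset.range (ℓ+1)) ℓ (fun s => Jz d ^ s),
        if_pos (Finset.self_mem_range_succ ℓ)]
  | succ n ih =>
    obtain ⟨b, hb1, hb2⟩ := ih
    refine ⟨fun t => ∑ s ∈ Finset.range (ℓ + 1), b s * cR d s t, fun t ht => ?_, ?_⟩
    · apply Finset.sum_eq_zero
      intro s _
      by_cases hs : s % 2 = ℓ % 2
      · rw [cR_parity d s t (by omega), mul_zero]
      · rw [hb1 s hs, zero_mul]
    · have hstep : zetaIter d (n + 1) ((Jz d) ^ ℓ) = zeta d (zetaIter d n ((Jz d) ^ ℓ)) := by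
        unfold zetaIter
        rw [Function.iterate_succ_apply']
      rw [hstep, hb2, zeta_linear,
        Finset.sum_congr rfl (fun s _ => by rw [zeta_pow hd s])]
      have hext : ∀ s ∈ Finset.range (ℓ + 1),
          (b s : ℂ) • ∑ t ∈ Finset.range (s + 1), (cR d s t : ℂ) • Jz d ^ t
          = ∑ t ∈ Finset.range (ℓ + 1), (b s : ℂ) • ((cR d s t : ℂ) • Jz d ^ t) := by
        intro s hs
        rw [Finset.smul_sum]
        apply Finset.sum_subset
        · exact Finset.range_subset_range.mpr (by simp only [Finset.mem_range] at hs; omega)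
        · intro t ht hts
          simp only [Finset.mem_range, not_lt] at ht hts
          rw [cR_gt d s t (by omega)]
          simp
      rw [Finset.sum_congr rfl hext, Finset.sum_comm]
      refine Finset.sum_congr rfl fun t _ => ?_
      rw [show ((∑ s ∈ Finset.range (ℓ + 1), b s * cR d s t : ℝ) : ℂ)
          = ∑ s ∈ Finset.range (ℓ + 1), (b s : ℂ) * (cR d s t : ℂ) from by push_cast; rfl,
        Finset.sum_smul]
      exact Finset.sum_congr rfl fun s _ => smul_smul _ _ _

end
end

section
/- For every integer ℓ ≥ 1, ζ(J_z^ℓ) = ζ(J_z^{ℓ−1}) J_z + G(ℓ), where G(ℓ) = (i/λ)(J_x J_z^{ℓ−1} J_y − J_y J_z^{ℓ−1} J_x). -/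
open Matrix Complex Kronecker
open scoped ComplexOrder

/-- G(ℓ) = (i/λ)(J_x J_z^{ℓ-1} J_y − J_y J_z^{ℓ-1} J_x) -/
noncomputable def Gmap (d : ℕ) (ℓ : ℕ) : Matrix (Fin d) (Fin d) ℂ :=
  (Complex.I / (lam d : ℂ)) •
    (Jx d * (Jz d) ^ (ℓ - 1) * Jy d - Jy d * (Jz d) ^ (ℓ - 1) * Jx d)

lemma JzJp (d : ℕ) : Jz d * Jp d = Jp d * Jz d + Jp d := by
  ext a b
  simp only [Jz, Jp, Matrix.diagonal_mul, Matrix.mul_diagonal, Matrix.add_apply, Matrix.of_apply]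
  by_cases h : (a : ℕ) = (b : ℕ) + 1
  · simp only [h, if_pos]
    push_cast
    ring
  · simp [h]

lemma JzH (d : ℕ) : (Jz d)ᴴ = Jz d := by
  have h : (star fun m : Fin d => ((m : ℂ) - ((d : ℂ) - 1) / 2)) =
      fun m : Fin d => ((m : ℂ) - ((d : ℂ) - 1) / 2) := by
    funext m
    simp [Pi.star_apply, star_sub, star_div₀, star_natCast, star_one]
  rw [Jz, Matrix.diagonal_conjTranspose, h]

lemma JzJm (d : ℕ) : Jz d * Jm d = Jm d * Jz d - Jm d := by
  have h := congrArg Matrix.conjTranspose (JzJp d)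
  simp only [Matrix.conjTranspose_mul, Matrix.conjTranspose_add, JzH] at h
  rw [Jm, h]
  abel

lemma JzJx (d : ℕ) : Jz d * Jx d = Jx d * Jz d + Complex.I • Jy d := by
  have hIy : Complex.I • Jy d = (2 : ℂ)⁻¹ • (Jp d - Jm d) := by
    rw [Jy, smul_smul]
    congr 1
    rw [mul_inv, Complex.inv_I]
    linear_combination -(2:ℂ)⁻¹ * Complex.I_mul_I
  rw [hIy, Jx, Matrix.mul_smul, Matrix.smul_mul, mul_add, add_mul, JzJp, JzJm]
  module

lemma JzJy (d : ℕ) : Jz d * Jy d = Jy d * Jz d - Complex.I • Jx d := by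
  have hIx : Complex.I • Jx d = -((2 * Complex.I)⁻¹ • (Jp d + Jm d)) := by
    rw [Jx, smul_smul, ← neg_smul]
    congr 1
    rw [mul_inv, Complex.inv_I]
    have := Complex.I_mul_I
    ring_nf
  rw [hIx, Jy, Matrix.mul_smul, Matrix.smul_mul, mul_sub, sub_mul, JzJp, JzJm]
  module

theorem stmt_4 (d : ℕ) (hd : 2 ≤ d) (ℓ : ℕ) (hℓ : 1 ≤ ℓ) :
    zeta d ((Jz d) ^ ℓ) = zeta d ((Jz d) ^ (ℓ - 1)) * Jz d + Gmap d ℓ := by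
  obtain ⟨k, rfl⟩ : ∃ k, ℓ = k + 1 := ⟨ℓ - 1, (Nat.succ_pred_eq_of_pos hℓ).symm⟩
  simp only [Nat.add_sub_cancel]
  rw [pow_succ]
  simp only [zeta, Gmap, Nat.add_sub_cancel]
  have h1 := JzJx d
  have h2 := JzJy d
  rw [show Jx d * (Jz d ^ k * Jz d) * Jx d = Jx d * Jz d ^ k * (Jz d * Jx d) by
        noncomm_ring,
      show Jy d * (Jz d ^ k * Jz d) * Jy d = Jy d * Jz d ^ k * (Jz d * Jy d) by
        noncomm_ring,
      h1, h2]
  simp only [mul_add, mul_sub, add_mul, sub_mul, smul_sub, smul_add, mul_smul_comm,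
    smul_mul_assoc, mul_assoc, smul_smul]
  module
end

section
/- Let S = Σ_{k∈{x,y,z}} conj(J_k) ⊗ J_k acting on ℂ^d ⊗ ℂ^d, where conj denotes the entrywise complex conjugate. Then the d matrices S⁰ = I, S, S², …, S^{d−1} are linearly independent over ℂ. -/
open Matrix Complex Kronecker
open scoped ComplexOrder

noncomputable section AuxStmt13

variable (d : ℕ)

lemma Jp_conj (a b : Fin d) : (starRingEnd ℂ) (Jp d a b) = Jp d a b := by
  simp only [Jp, Matrix.of_apply]
  split <;> simp [map_ofNat]

lemma Jz_conj (a b : Fin d) : (starRingEnd ℂ) (Jz d a b) = Jz d a b := by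
  simp only [Jz, Matrix.diagonal_apply]
  split <;> simp [map_ofNat]

lemma Jm_apply (a b : Fin d) : Jm d a b = Jp d b a := by
  rw [Jm, Matrix.conjTranspose_apply, ← starRingEnd_apply, Jp_conj]

lemma Jz_ne (a b : Fin d) (h : a ≠ b) : Jz d a b = 0 := by
  simp [Jz, Matrix.diagonal_apply, h]



def Smat (d : ℕ) : Matrix (Fin d × Fin d) (Fin d × Fin d) ℂ :=
  (Jx d).map (starRingEnd ℂ) ⊗ₖ Jx d + (Jy d).map (starRingEnd ℂ) ⊗ₖ Jy d
    + (Jz d).map (starRingEnd ℂ) ⊗ₖ Jz d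

lemma S_apply (a b a' b' : Fin d) :
    Smat d (a,b) (a',b') =
      2⁻¹ * (Jp d a a' * Jp d b b' + Jp d a' a * Jp d b' b) + Jz d a a' * Jz d b b' := by
  have hx : ∀ u v : Fin d, Jx d u v = 2⁻¹ * (Jp d u v + Jp d v u) := by
    intro u v
    simp [Jx, Jm_apply, Matrix.add_apply, Matrix.smul_apply, smul_eq_mul]
  have hy : ∀ u v : Fin d, Jy d u v = (2*Complex.I)⁻¹ * (Jp d u v - Jp d v u) := by
    intro u v
    simp [Jy, Jm_apply, Matrix.sub_apply, Matrix.smul_apply, smul_eq_mul]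
  have e1 : Smat d (a,b) (a',b') =
      (starRingEnd ℂ) (Jx d a a') * Jx d b b' + (starRingEnd ℂ) (Jy d a a') * Jy d b b'
        + (starRingEnd ℂ) (Jz d a a') * Jz d b b' := by
    simp [Smat, Matrix.add_apply, Matrix.kroneckerMap_apply, Matrix.map_apply]
  have h2 : (starRingEnd ℂ) (2⁻¹ : ℂ) = 2⁻¹ := by simp [map_ofNat]
  have h2i : (starRingEnd ℂ) ((2 * Complex.I)⁻¹ : ℂ) = -(2 * Complex.I)⁻¹ := by
    rw [map_inv₀, _root_.map_mul, Complex.conj_I, map_ofNat]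
    rw [mul_neg, neg_inv]
  rw [e1, Jz_conj, hx, hy, hx, hy]
  simp only [_root_.map_mul, map_add, map_sub, Jp_conj, h2, h2i]
  have hI : (2 * Complex.I)⁻¹ * (2 * Complex.I)⁻¹ = -(4:ℂ)⁻¹ := by
    rw [← mul_inv]
    have : (2 * Complex.I) * (2 * Complex.I) = -4 := by
      have := Complex.I_mul_I; ring_nf; rw [Complex.I_sq]; ring
    rw [this, inv_neg]
  set x := Jp d a a'; set y := Jp d a' a; set u := Jp d b b'; set v := Jp d b' b
  have : -(2 * Complex.I)⁻¹ * (x - y) * ((2 * Complex.I)⁻¹ * (u - v))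
      = -((2 * Complex.I)⁻¹ * (2 * Complex.I)⁻¹) * ((x-y)*(u-v)) := by ring
  rw [this, hI]
  ring



lemma Jp_zero {a b : Fin d} (h : (a:ℕ) ≠ (b:ℕ)+1) : Jp d a b = 0 := by
  simp [Jp, h]

lemma Jp_succ {a b : Fin d} (h : (a:ℕ) = (b:ℕ)+1) :
    Jp d a b = ((Real.sqrt ((((b:ℕ):ℝ) + 1) * ((d : ℝ) - 1 - ((b:ℕ):ℝ)))) : ℂ) := by
  simp [Jp, h]

lemma main_ind (d : ℕ) [NeZero d] (k : ℕ) :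
    (∀ a b : Fin d, ¬(a = b ∧ (a:ℕ) ≤ k) → (Smat d ^ k) (a,b) (0,0) = 0) ∧
    (∀ hk : k < d, ∃ r : ℝ, 0 < r ∧ (Smat d ^ k) (⟨k,hk⟩,⟨k,hk⟩) (0,0) = (r:ℂ)) := by
  induction k with
  | zero =>
    constructor
    · intro a b h
      rw [pow_zero]
      apply Matrix.one_apply_ne
      intro hab
      apply h
      rw [Prod.ext_iff] at hab
      exact ⟨hab.1.trans hab.2.symm, by rw [show a = 0 from hab.1]; simp⟩
    · intro hk
      refine ⟨1, one_pos, ?_⟩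
      have h0 : (⟨0, hk⟩ : Fin d) = 0 := Fin.ext (by simp)
      rw [pow_zero, h0, Matrix.one_apply_eq]
      simp
  | succ k ih =>
    have hpow : Smat d ^ (k+1) = Smat d * Smat d ^ k := by rw [pow_succ']
    constructor
    · intro a b h
      rw [hpow, Matrix.mul_apply]
      apply Finset.sum_eq_zero
      rintro ⟨c, c'⟩ -
      by_cases hq : c = c' ∧ (c:ℕ) ≤ k
      · obtain ⟨rfl, hck⟩ := hq
        rw [S_apply]
        have h1 : Jp d a c * Jp d b c = 0 := by
          by_cases ha : (a:ℕ) = (c:ℕ)+1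
          · by_cases hb : (b:ℕ) = (c:ℕ)+1
            · exact absurd ⟨Fin.ext (ha.trans hb.symm), by omega⟩ h
            · rw [Jp_zero d hb, mul_zero]
          · rw [Jp_zero d ha, zero_mul]
        have h2 : Jp d c a * Jp d c b = 0 := by
          by_cases ha : (c:ℕ) = (a:ℕ)+1
          · by_cases hb : (c:ℕ) = (b:ℕ)+1
            · refine absurd ⟨Fin.ext (by omega), by omega⟩ h
            · rw [Jp_zero d hb, mul_zero]
          · rw [Jp_zero d ha, zero_mul]
        have h3 : Jz d a c * Jz d b c = 0 := by
          by_cases ha : a = c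
          · by_cases hb : b = c
            · exact absurd ⟨ha.trans hb.symm, by rw [ha]; omega⟩ h
            · rw [Jz_ne d b c hb, mul_zero]
          · rw [Jz_ne d a c ha, zero_mul]
        rw [h1, h2, h3]
        ring
      · rw [ih.1 c c' hq, mul_zero]
    · intro hk
      have hk' : k < d := Nat.lt_of_succ_lt hk
      obtain ⟨r, hr, hre⟩ := ih.2 hk'
      have hd2 : ((k:ℝ)) + 2 ≤ (d:ℝ) := by exact_mod_cast hk
      have hfac : (0:ℝ) < ((k:ℝ) + 1) * ((d:ℝ) - 1 - (k:ℝ)) := by nlinarith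
      refine ⟨2⁻¹ * (((k:ℝ)+1) * ((d:ℝ)-1-(k:ℝ))) * r, by positivity, ?_⟩
      rw [hpow, Matrix.mul_apply]
      rw [Finset.sum_eq_single ((⟨k,hk'⟩, ⟨k,hk'⟩) : Fin d × Fin d)]
      · have e1 : Jp d ⟨k+1,hk⟩ ⟨k,hk'⟩
            = ((Real.sqrt (((k:ℝ) + 1) * ((d : ℝ) - 1 - (k:ℝ)))) : ℂ) := Jp_succ d rfl
        have e2 : Jp d ⟨k,hk'⟩ ⟨k+1,hk⟩ = 0 := Jp_zero d (show k ≠ (k+1)+1 by omega)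
        have e3 : Jz d ⟨k+1,hk⟩ ⟨k,hk'⟩ = 0 := Jz_ne d _ _ (by simp)
        rw [S_apply, e1, e2, e3, hre]
        have hss : (Real.sqrt (((k:ℝ) + 1) * ((d : ℝ) - 1 - (k:ℝ))))
            * (Real.sqrt (((k:ℝ) + 1) * ((d : ℝ) - 1 - (k:ℝ))))
            = ((k:ℝ) + 1) * ((d : ℝ) - 1 - (k:ℝ)) := Real.mul_self_sqrt (le_of_lt hfac)
        rw [show ((Real.sqrt (((k:ℝ) + 1) * ((d : ℝ) - 1 - (k:ℝ))) : ℂ))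
            * ((Real.sqrt (((k:ℝ) + 1) * ((d : ℝ) - 1 - (k:ℝ))) : ℂ))
            = ((((k:ℝ) + 1) * ((d : ℝ) - 1 - (k:ℝ)) : ℝ) : ℂ) from by
          rw [← Complex.ofReal_mul, hss]]
        push_cast
        ring
      · rintro ⟨c, c'⟩ - hne
        by_cases hq : c = c' ∧ (c:ℕ) ≤ k
        · obtain ⟨rfl, hck⟩ := hq
          have hck' : (c:ℕ) ≠ k := by
            intro hc
            apply hne
            have : c = (⟨k, hk'⟩ : Fin d) := Fin.ext hc
            rw [this]
          rw [S_apply]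
          have h1 : Jp d ⟨k+1,hk⟩ c = 0 := Jp_zero d (by simp; omega)
          have h2 : Jp d c ⟨k+1,hk⟩ = 0 := Jp_zero d (by simp; omega)
          have h3 : Jz d ⟨k+1,hk⟩ c = 0 := Jz_ne d _ _ (by
            intro hc
            have := congrArg Fin.val hc
            simp at this
            omega)
          rw [h1, h2, h3]
          ring
        · rw [ih.1 c c' hq, mul_zero]
      · intro habs
        exact absurd (Finset.mem_univ _) habs

end AuxStmt13

theorem stmt_13 (d : ℕ) (hd : 2 ≤ d) :
    LinearIndependent ℂ (fun k : Fin d =>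
      ((Jx d).map (starRingEnd ℂ) ⊗ₖ Jx d + (Jy d).map (starRingEnd ℂ) ⊗ₖ Jy d
        + (Jz d).map (starRingEnd ℂ) ⊗ₖ Jz d) ^ (k : ℕ)) := by
  haveI : NeZero d := ⟨by omega⟩
  have hSfun : (fun k : Fin d =>
      ((Jx d).map (starRingEnd ℂ) ⊗ₖ Jx d + (Jy d).map (starRingEnd ℂ) ⊗ₖ Jy d
        + (Jz d).map (starRingEnd ℂ) ⊗ₖ Jz d) ^ (k : ℕ))
      = fun k : Fin d => Smat d ^ (k : ℕ) := rfl
  rw [hSfun, Fintype.linearIndependent_iff]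
  intro g hg
  have hent : ∀ n : Fin d, ∑ k : Fin d, g k * (Smat d ^ (k:ℕ)) (n,n) (0,0) = 0 := by
    intro n
    have h1 : (∑ k : Fin d, g k • Smat d ^ (k:ℕ)) (n,n) (0,0) = 0 := by
      rw [hg]; rfl
    simpa [Matrix.sum_apply, Matrix.smul_apply, smul_eq_mul] using h1
  have hstep : ∀ n : Fin d, (∀ k : Fin d, (n:ℕ) < (k:ℕ) → g k = 0) → g n = 0 := by
    intro n hup
    have hsingle : ∑ k : Fin d, g k * (Smat d ^ (k:ℕ)) (n,n) (0,0)
        = g n * (Smat d ^ ((n:ℕ))) (n,n) (0,0) := by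
      apply Finset.sum_eq_single
      · intro k _ hk
        have hkn : (k:ℕ) ≠ (n:ℕ) := fun h => hk (Fin.ext h)
        rcases lt_or_gt_of_ne hkn with hlt | hgt
        · rw [(main_ind d (k:ℕ)).1 n n (by
            rintro ⟨-, h2⟩; omega), mul_zero]
        · rw [hup k hgt, zero_mul]
      · intro habs
        exact absurd (Finset.mem_univ _) habs
    obtain ⟨r, hr, hre⟩ := (main_ind d (n:ℕ)).2 n.isLt
    have hnn : (⟨(n:ℕ), n.isLt⟩ : Fin d) = n := rfl
    rw [hnn] at hre
    have hthis := hent n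
    rw [hsingle, hre] at hthis
    have hrne : ((r:ℂ)) ≠ 0 := by
      simp only [ne_eq, Complex.ofReal_eq_zero]
      exact ne_of_gt hr
    exact (mul_eq_zero.mp hthis).resolve_right hrne
  have key : ∀ m : ℕ, ∀ n : Fin d, d ≤ (n:ℕ) + m + 1 → g n = 0 := by
    intro m
    induction m with
    | zero =>
      intro n hn
      apply hstep n
      intro k hk
      have := k.isLt
      omega
    | succ m ihm =>
      intro n hn
      apply hstep n
      intro k hk
      exact ihm k (by omega)
  intro i
  exact key (d - 1 - (i:ℕ)) i (by have := i.isLt; omega)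
end

section
/- For every d×d complex matrix ρ with Tr ρ = 1, the probability of correctly identifying a known spin-½ state using the total-angular-momentum measurement satisfies ½ ( Tr[Π_+ (ρ ⊗ e_1 e_1†)] + Tr[Π_− (ρ ⊗ e_0 e_0†)] ) = ½ + Tr[ρ J_z]/(2j+1), where e_1, e_0 ∈ ℂ² are the spin-up (K_z = +½) and spin-down (K_z = −½) basis vectors. -/
open Matrix Complex Kronecker
open scoped ComplexOrder

/-- total angular momentum squared 𝒥² on ℂ^d ⊗ ℂ² -/
noncomputable def J2half (d : ℕ) : Matrix (Fin d × Fin 2) (Fin d × Fin 2) ℂ :=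
  (Jx d ⊗ₖ (1 : Matrix (Fin 2) (Fin 2) ℂ) + (1 : Matrix (Fin d) (Fin d) ℂ) ⊗ₖ Jx 2) ^ 2
  + (Jy d ⊗ₖ (1 : Matrix (Fin 2) (Fin 2) ℂ) + (1 : Matrix (Fin d) (Fin d) ℂ) ⊗ₖ Jy 2) ^ 2
  + (Jz d ⊗ₖ (1 : Matrix (Fin 2) (Fin 2) ℂ) + (1 : Matrix (Fin d) (Fin d) ℂ) ⊗ₖ Jz 2) ^ 2

/-- projector onto total angular momentum j + 1/2 -/
noncomputable def PiPlus (d : ℕ) : Matrix (Fin d × Fin 2) (Fin d × Fin 2) ℂ :=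
  ((2 * jr d + 1 : ℝ) : ℂ)⁻¹ •
    (J2half d - (((jr d - 1 / 2) * (jr d + 1 / 2) : ℝ) : ℂ) •
      (1 : Matrix (Fin d × Fin 2) (Fin d × Fin 2) ℂ))

/-- projector onto total angular momentum j - 1/2 -/
noncomputable def PiMinus (d : ℕ) : Matrix (Fin d × Fin 2) (Fin d × Fin 2) ℂ :=
  1 - PiPlus d


section Aux

lemma Jm_apply' (d : ℕ) (a b : Fin d) : Jm d a b =
    if (b : ℕ) = (a : ℕ) + 1 then
      (Real.sqrt (((a : ℕ) + 1) * ((d : ℝ) - 1 - (a : ℕ))) : ℂ)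
    else 0 := by
  simp only [Jm, Matrix.conjTranspose_apply, Jp, Matrix.of_apply]
  split <;> simp [Complex.conj_ofReal]

lemma sqrt_mul_self' (d : ℕ) (m : ℕ) (hm : m < d) :
    ((Real.sqrt (((m : ℝ) + 1) * ((d : ℝ) - 1 - m)) : ℂ)) *
      ((Real.sqrt (((m : ℝ) + 1) * ((d : ℝ) - 1 - m)) : ℂ)) =
    ((((m : ℝ) + 1) * ((d : ℝ) - 1 - m) : ℝ) : ℂ) := by
  rw [← Complex.ofReal_mul, Real.mul_self_sqrt]
  have h : (m : ℝ) + 1 ≤ d := by exact_mod_cast hm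
  have : (0:ℝ) ≤ (d : ℝ) - 1 - m := by linarith
  positivity

lemma JpJm_apply (d : ℕ) (a b : Fin d) :
    (Jp d * Jm d) a b =
      if a = b then (((a : ℝ) * ((d : ℝ) - (a : ℕ)) : ℝ) : ℂ) else 0 := by
  rw [Matrix.mul_apply]
  rcases Nat.eq_zero_or_pos (a : ℕ) with h0 | hpos
  · rw [Finset.sum_eq_zero]
    · rcases eq_or_ne a b with rfl | hne
      · simp [h0]
      · simp [hne]
    · intro c _
      simp only [Jp, Matrix.of_apply, h0]
      simp
  · obtain ⟨m, hm⟩ : ∃ m, (a : ℕ) = m + 1 := ⟨(a : ℕ) - 1, (Nat.succ_pred_eq_of_pos hpos).symm⟩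
    have hmd : m < d := by have := a.2; omega
    rw [Finset.sum_eq_single (⟨m, hmd⟩ : Fin d)]
    · simp only [Jp, Jm_apply', Matrix.of_apply, Fin.val_mk, hm]
      rcases eq_or_ne a b with rfl | hne
      · simp only [hm, if_pos rfl, if_true]
        rw [sqrt_mul_self' d m hmd]
        push_cast
        ring_nf
      · have hb : ¬((b : ℕ) = m + 1) := fun hb => hne (Fin.ext (hb.trans hm.symm).symm)
        simp [hb, hne]
    · intro c _ hc
      simp only [Jp, Matrix.of_apply, hm]
      rw [if_neg, zero_mul]
      intro h
      exact hc (Fin.ext (by simp; omega))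
    · intro h
      exact absurd (Finset.mem_univ _) h

lemma JmJp_apply (d : ℕ) (a b : Fin d) :
    (Jm d * Jp d) a b =
      if a = b then ((((a : ℝ) + 1) * ((d : ℝ) - 1 - (a : ℕ)) : ℝ) : ℂ) else 0 := by
  rw [Matrix.mul_apply]
  rcases Nat.lt_or_ge ((a : ℕ) + 1) d with hlt | hge
  · rw [Finset.sum_eq_single (⟨(a : ℕ) + 1, hlt⟩ : Fin d)]
    · simp only [Jp, Jm_apply', Matrix.of_apply, Fin.val_mk]
      rcases eq_or_ne a b with rfl | hne
      · simp only [if_pos rfl, if_true]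
        rw [sqrt_mul_self' d a a.2]
      · have hcond : ¬((a : ℕ) + 1 = (b : ℕ) + 1) := fun h => hne (Fin.ext (by omega))
        simp [hcond, hne]
        intro h
        exact absurd (Fin.ext (by exact_mod_cast h)) hne
    · intro c _ hc
      simp only [Jm_apply']
      rw [if_neg, zero_mul]
      intro h
      exact hc (Fin.ext (by simpa using h))
    · intro h
      exact absurd (Finset.mem_univ _) h
  · rw [Finset.sum_eq_zero]
    · have hde : ((a : ℕ) : ℝ) = (d : ℝ) - 1 := by
        have : (a : ℕ) + 1 = d := le_antisymm a.2 hge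
        push_cast [← this]
        ring
      have h2 : (((a : ℕ) : ℝ) + 1) * ((d : ℝ) - 1 - (a : ℕ)) = 0 := by rw [hde]; ring
      rcases eq_or_ne a b with rfl | hne
      · simp [h2]
      · simp [hne]
    · intro c _
      simp only [Jm_apply']
      rw [if_neg, zero_mul]
      intro h
      have := c.2
      omega

lemma hxy' (d : ℕ) : Jx d * Jx d + Jy d * Jy d
    = (2 : ℂ)⁻¹ • (Jp d * Jm d + Jm d * Jp d) := by
  have hI : ((2 * Complex.I)⁻¹ * (2 * Complex.I)⁻¹) = -(4 : ℂ)⁻¹ := by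
    rw [← mul_inv]
    have h2 : (2 * Complex.I) * (2 * Complex.I) = -4 := by
      rw [mul_mul_mul_comm, Complex.I_mul_I]
      norm_num
    rw [h2, inv_neg]
  have hx : Jx d * Jx d = (4:ℂ)⁻¹ • ((Jp d + Jm d) * (Jp d + Jm d)) := by
    rw [Jx, Matrix.smul_mul, Matrix.mul_smul, smul_smul]
    norm_num
  have hy : Jy d * Jy d = -((4:ℂ)⁻¹ • ((Jp d - Jm d) * (Jp d - Jm d))) := by
    rw [Jy, Matrix.smul_mul, Matrix.mul_smul, smul_smul, hI, neg_smul]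
  rw [hx, hy]
  simp only [mul_add, add_mul, mul_sub, sub_mul]
  module

lemma casimir (d : ℕ) : Jx d * Jx d + Jy d * Jy d + Jz d * Jz d
    = ((lam d : ℝ) : ℂ) • 1 := by
  rw [hxy']
  ext a b
  simp only [Matrix.add_apply, Matrix.smul_apply, JpJm_apply, JmJp_apply, Jz,
    Matrix.diagonal_mul_diagonal, Matrix.diagonal_apply, Matrix.one_apply, lam, smul_ite,
    smul_eq_mul, mul_ite, mul_one, mul_zero]
  rcases eq_or_ne a b with rfl | hne
  · simp only [if_pos rfl]
    push_cast
    ring_nf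
  · simp [hne]

lemma Jx_diag (d : ℕ) (i : Fin d) : Jx d i i = 0 := by
  simp [Jx, Jp, Jm_apply']

lemma Jy_diag (d : ℕ) (i : Fin d) : Jy d i i = 0 := by
  simp [Jy, Jp, Jm_apply']

lemma trace_mul_std {n : Type*} [DecidableEq n] [Fintype n] (M : Matrix n n ℂ) (i : n) :
    Matrix.trace (M * Matrix.single i i 1) = M i i := by
  simp [Matrix.trace, Matrix.mul_apply, Matrix.single, Matrix.diag, ite_and,
    Finset.sum_ite_eq, Finset.sum_ite_eq']

lemma trace_term (d : ℕ) (A : Matrix (Fin d) (Fin d) ℂ) (B : Matrix (Fin 2) (Fin 2) ℂ)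
    (ρ : Matrix (Fin d) (Fin d) ℂ) (i : Fin 2) :
    Matrix.trace ((A ⊗ₖ (1 : Matrix (Fin 2) (Fin 2) ℂ)
        + (1 : Matrix (Fin d) (Fin d) ℂ) ⊗ₖ B) ^ 2
        * (ρ ⊗ₖ Matrix.single i i (1 : ℂ)))
      = Matrix.trace (A * A * ρ) + 2 * (Matrix.trace (A * ρ) * B i i)
        + Matrix.trace ρ * (B * B) i i := by
  simp only [pow_two, add_mul, mul_add, Matrix.trace_add, ← Matrix.mul_kronecker_mul,
    one_mul, mul_one, Matrix.trace_kronecker, trace_mul_std, Matrix.one_apply_eq]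
  have hE : (Matrix.single i i (1 : ℂ)).trace = 1 := by
    have := trace_mul_std (1 : Matrix (Fin 2) (Fin 2) ℂ) i
    simpa using this
  rw [hE]
  ring

lemma trace_J2half (d : ℕ) (ρ : Matrix (Fin d) (Fin d) ℂ) (i : Fin 2) :
    Matrix.trace (J2half d * (ρ ⊗ₖ Matrix.single i i (1 : ℂ)))
      = ((lam d : ℝ) : ℂ) * Matrix.trace ρ
        + 2 * (Matrix.trace (Jz d * ρ) * ((i : ℂ) - 1 / 2))
        + Matrix.trace ρ * (((3 : ℝ)/4 : ℝ) : ℂ) := by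
  rw [J2half, add_mul, add_mul, Matrix.trace_add, Matrix.trace_add,
    trace_term, trace_term, trace_term]
  have hsum : Matrix.trace (Jx d * Jx d * ρ) + Matrix.trace (Jy d * Jy d * ρ)
      + Matrix.trace (Jz d * Jz d * ρ) = ((lam d : ℝ) : ℂ) * Matrix.trace ρ := by
    rw [← Matrix.trace_add, ← Matrix.trace_add, ← add_mul, ← add_mul, casimir,
      Matrix.smul_mul, Matrix.trace_smul, one_mul, smul_eq_mul]
  have hsum2 : (Jx 2 * Jx 2) i i + (Jy 2 * Jy 2) i i + (Jz 2 * Jz 2) i i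
      = (((3 : ℝ)/4 : ℝ) : ℂ) := by
    have := congrArg (fun M => M i i) (casimir 2)
    simp only [Matrix.add_apply, Matrix.smul_apply, Matrix.one_apply_eq, smul_eq_mul,
      mul_one] at this
    rw [this]
    norm_num [lam]
  have hz : Jz 2 i i = (i : ℂ) - 1 / 2 := by
    simp [Jz, Matrix.diagonal_apply]
    norm_num
  rw [Jx_diag, Jy_diag, hz]
  have := hsum
  have := hsum2
  linear_combination hsum + Matrix.trace ρ * hsum2
    + (2 * ((i : ℂ) - 1/2)) * (Matrix.trace (Jz d * ρ) - Matrix.trace (Jz d * ρ))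

end Aux

theorem stmt_16 (d : ℕ) (hd : 2 ≤ d)
    (ρ : Matrix (Fin d) (Fin d) ℂ) (hρ : Matrix.trace ρ = 1) :
    (2 : ℂ)⁻¹ *
      (Matrix.trace (PiPlus d * (ρ ⊗ₖ Matrix.single (1 : Fin 2) (1 : Fin 2) (1 : ℂ)))
       + Matrix.trace (PiMinus d * (ρ ⊗ₖ Matrix.single (0 : Fin 2) (0 : Fin 2) (1 : ℂ))))
    = 1 / 2 + Matrix.trace (ρ * Jz d) / ((2 * jr d + 1 : ℝ) : ℂ) := by
  have hdc : ((2 * jr d + 1 : ℝ) : ℂ) = (d : ℂ) := by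
    push_cast [jr]
    ring
  have hd0 : (d : ℂ) ≠ 0 := Nat.cast_ne_zero.mpr (by omega)
  have htrE : ∀ i : Fin 2,
      Matrix.trace (ρ ⊗ₖ Matrix.single i i (1 : ℂ)) = 1 := by
    intro i
    rw [Matrix.trace_kronecker, hρ, one_mul]
    have : Matrix.trace ((1 : Matrix (Fin 2) (Fin 2) ℂ) * Matrix.single i i (1 : ℂ))
        = 1 := by rw [trace_mul_std]; simp
    rwa [one_mul] at this
  have hPp : ∀ i : Fin 2,
      Matrix.trace (PiPlus d * (ρ ⊗ₖ Matrix.single i i (1 : ℂ)))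
        = ((2 * jr d + 1 : ℝ) : ℂ)⁻¹ *
          (Matrix.trace (J2half d * (ρ ⊗ₖ Matrix.single i i (1 : ℂ)))
            - (((jr d - 1 / 2) * (jr d + 1 / 2) : ℝ) : ℂ)) := by
    intro i
    rw [PiPlus, Matrix.smul_mul, Matrix.trace_smul, Matrix.sub_mul, Matrix.trace_sub,
      Matrix.smul_mul, Matrix.trace_smul, one_mul, htrE i, smul_eq_mul, smul_eq_mul, mul_one]
  rw [PiMinus, Matrix.sub_mul, Matrix.trace_sub, one_mul, htrE 0, hPp 0, hPp 1,
    trace_J2half, trace_J2half, hρ, hdc]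
  have hz : Matrix.trace (ρ * Jz d) = Matrix.trace (Jz d * ρ) := Matrix.trace_mul_comm ρ (Jz d)
  rw [hz]
  have h1 : ((1 : Fin 2) : ℂ) = 1 := by norm_num
  have h0 : ((0 : Fin 2) : ℂ) = 0 := by norm_num
  rw [h1, h0]
  have hlam : ((lam d : ℝ) : ℂ) = ((d : ℂ)^2 - 1)/4 := by push_cast [lam]; ring
  have hjr : (((jr d - 1 / 2) * (jr d + 1 / 2) : ℝ) : ℂ)
      = (((d : ℂ) - 2)/2) * ((d : ℂ)/2) := by push_cast [jr]; ring
  rw [hlam, hjr]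
  field_simp
  ring
end
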